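/- Suppose the supervised influence function ψ_SUP and semi-supervised influence function ψ_SSL of the Q-learning parameter estimator satisfy ψ_SSL(L; θ̄) = ψ_SUP(L; θ̄) − E(U), where the random vector E(U) depends only on the unlabeled-data features U and satisfies the orthogonality constraint E[(ψ_SUP(L; θ̄) − E(U)) E(U)ᵀ] = 0. Then the asymptotic variances V_SSL = Σ^{-1} E[ψ_SSL ψ_SSLᵀ] (Σ^{-1})ᵀ and V_SUP = Σ^{-1} E[ψ_SUP ψ_SUPᵀ](Σ^{-1})ᵀ satisfy V_SSL = V_SUP − Σ^{-1} Var[ψ_SUP − ψ_SSL] (Σ^{-1})ᵀ. In particular V_SSL ⪯ V_SUP in the positive semidefinite order. -/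

import Mathlib

open MeasureTheory

noncomputable section

/-- Proposition 3.2: if the semi-supervised influence function satisfies
`ψ_SSL = ψ_SUP − E` with `E[(ψ_SUP − E) Eᵀ] = 0`, then the asymptotic variances
`V = Σ⁻¹ E[ψψᵀ] Σ⁻ᵀ` satisfy `V_SSL = V_SUP − Σ⁻¹ Var[ψ_SUP − ψ_SSL] Σ⁻ᵀ`; in particular
`V_SUP − V_SSL` is positive semidefinite. -/
theorem statement6 {Ω : Type*} [MeasurableSpace Ω] {p : ℕ}
    (μ : Measure Ω) [IsProbabilityMeasure μ]
    (ψSUP ψSSL Err : Ω → Fin p → ℝ)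
    (Sig : Matrix (Fin p) (Fin p) ℝ) (hSig : IsUnit Sig.det)
    (hL2SUP : ∀ i, MemLp (fun ω => ψSUP ω i) 2 μ)
    (hL2E : ∀ i, MemLp (fun ω => Err ω i) 2 μ)
    (hdef : ∀ ω, ψSSL ω = ψSUP ω - Err ω)
    (hmean : ∀ i, ∫ ω, ψSUP ω i ∂μ = 0)
    (hmeanE : ∀ i, ∫ ω, Err ω i ∂μ = 0)
    (horth : ∀ i j, ∫ ω, (ψSUP ω i - Err ω i) * Err ω j ∂μ = 0) :
    (Sig⁻¹ * (Matrix.of fun i j => ∫ ω, ψSSL ω i * ψSSL ω j ∂μ) * (Sig⁻¹).transpose =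
      Sig⁻¹ * (Matrix.of fun i j => ∫ ω, ψSUP ω i * ψSUP ω j ∂μ) * (Sig⁻¹).transpose -
      Sig⁻¹ * (Matrix.of fun i j =>
        ∫ ω, (ψSUP ω i - ψSSL ω i) * (ψSUP ω j - ψSSL ω j) ∂μ) * (Sig⁻¹).transpose) ∧
    (Sig⁻¹ * (Matrix.of fun i j => ∫ ω, ψSUP ω i * ψSUP ω j ∂μ) * (Sig⁻¹).transpose -
      Sig⁻¹ * (Matrix.of fun i j => ∫ ω, ψSSL ω i * ψSSL ω j ∂μ) *
        (Sig⁻¹).transpose).PosSemidef := by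
  -- integrability of products of L² functions
  have hmul : ∀ {f g : Ω → ℝ}, MemLp f 2 μ → MemLp g 2 μ →
      Integrable (fun ω => f ω * g ω) μ := by
    intro f g hf hg
    have h12 : (1:ENNReal) / 1 = 1 / 2 + 1 / 2 := by
      simp only [one_div, inv_one, ENNReal.inv_two_add_inv_two]
    have := (hg.smul (p := 2) (q := 2) (r := 1) hf).integrable le_rfl
    exact this
  have hEE : ∀ i j, Integrable (fun ω => Err ω i * Err ω j) μ :=
    fun i j => hmul (hL2E i) (hL2E j)
  have hSE : ∀ i j, Integrable (fun ω => ψSUP ω i * Err ω j) μ :=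
    fun i j => hmul (hL2SUP i) (hL2E j)
  have hES : ∀ i j, Integrable (fun ω => Err ω i * ψSUP ω j) μ :=
    fun i j => hmul (hL2E i) (hL2SUP j)
  have hSS : ∀ i j, Integrable (fun ω => ψSUP ω i * ψSUP ω j) μ :=
    fun i j => hmul (hL2SUP i) (hL2SUP j)
  have hdef' : ∀ ω i, ψSSL ω i = ψSUP ω i - Err ω i := by
    intro ω i; rw [hdef ω]; simp
  -- difference ψSUP - ψSSL = Err, as matrices of integrals
  have hdiff : (Matrix.of fun i j => ∫ ω, (ψSUP ω i - ψSSL ω i) * (ψSUP ω j - ψSSL ω j) ∂μ)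
      = (Matrix.of fun i j => ∫ ω, Err ω i * Err ω j ∂μ) := by
    ext i j
    simp only [Matrix.of_apply, hdef']
    congr 1; funext ω; ring
  -- key entrywise identity
  have hkey : (Matrix.of fun i j => ∫ ω, ψSSL ω i * ψSSL ω j ∂μ)
      = (Matrix.of fun i j => ∫ ω, ψSUP ω i * ψSUP ω j ∂μ)
        - (Matrix.of fun i j => ∫ ω, Err ω i * Err ω j ∂μ) := by
    ext i j
    simp only [Matrix.sub_apply, Matrix.of_apply]
    have h1 : (fun ω => ψSSL ω i * ψSSL ω j)
        = ((fun ω => ψSUP ω i * ψSUP ω j) - (fun ω => ψSUP ω i * Err ω j)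
            - (fun ω => Err ω i * ψSUP ω j)) + fun ω => Err ω i * Err ω j := by
      funext ω
      simp only [Pi.add_apply, Pi.sub_apply]
      rw [hdef' ω i, hdef' ω j]; ring
    rw [h1, integral_add' (((hSS i j).sub (hSE i j)).sub (hES i j)) (hEE i j),
      integral_sub' ((hSS i j).sub (hSE i j)) (hES i j),
      integral_sub' (hSS i j) (hSE i j)]
    have h2 : ∫ ω, ψSUP ω i * Err ω j ∂μ = ∫ ω, Err ω i * Err ω j ∂μ := by
      have h := horth i j
      have heq : (fun ω => (ψSUP ω i - Err ω i) * Err ω j)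
          = fun ω => ψSUP ω i * Err ω j - Err ω i * Err ω j := by
        funext ω; ring
      rw [heq, integral_sub (hSE i j) (hEE i j)] at h
      linarith
    have h3 : ∫ ω, Err ω i * ψSUP ω j ∂μ = ∫ ω, Err ω i * Err ω j ∂μ := by
      have h := horth j i
      have heq : (fun ω => (ψSUP ω j - Err ω j) * Err ω i)
          = fun ω => Err ω i * ψSUP ω j - Err ω i * Err ω j := by
        funext ω; ring
      rw [heq, integral_sub (hES i j) (hEE i j)] at h
      linarith
    rw [h2, h3]; ring
  constructor
  · rw [hdiff, hkey, Matrix.mul_sub, Matrix.sub_mul]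
  · rw [hkey]
    have : Sig⁻¹ * (Matrix.of fun i j => ∫ ω, ψSUP ω i * ψSUP ω j ∂μ) * Sig⁻¹.transpose -
        Sig⁻¹ * ((Matrix.of fun i j => ∫ ω, ψSUP ω i * ψSUP ω j ∂μ)
          - Matrix.of fun i j => ∫ ω, Err ω i * Err ω j ∂μ) * Sig⁻¹.transpose
        = Sig⁻¹ * (Matrix.of fun i j => ∫ ω, Err ω i * Err ω j ∂μ) * Sig⁻¹.transpose := by
      rw [Matrix.mul_sub, Matrix.sub_mul]; abel
    rw [this]
    have hps : (Matrix.of fun i j => ∫ ω, Err ω i * Err ω j ∂μ).PosSemidef := by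
      constructor
      · ext i j
        simp only [Matrix.conjTranspose_apply, Matrix.of_apply, star_trivial]
        congr 1; funext ω; ring
      · intro x
        simp only [dotProduct, Matrix.mulVec, dotProduct, Matrix.of_apply,
          Pi.star_apply, star_trivial, RCLike.re_to_real]
        have hswap : ∀ i, x i * ∑ j, (∫ ω, Err ω i * Err ω j ∂μ) * x j
            = ∫ ω, ∑ j, (x i * Err ω i) * (x j * Err ω j) ∂μ := by
          intro i
          rw [integral_finset_sum]
          · rw [Finset.mul_sum]
            congr 1; funext j
            rw [← integral_mul_const, ← integral_const_mul]
            congr 1; funext ω; ring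
          · intro j _
            exact (((hEE i j).const_mul (x i)).mul_const (x j)).congr
              (Filter.Eventually.of_forall fun ω => by ring)
        calc (0:ℝ) ≤ ∫ ω, (∑ i, x i * Err ω i)^2 ∂μ :=
              integral_nonneg fun ω => sq_nonneg _
          _ = ∑ i, x i * ∑ j, (∫ ω, Err ω i * Err ω j ∂μ) * x j := by
              simp_rw [hswap]
              rw [← integral_finset_sum]
              · congr 1; funext ω
                rw [sq, Finset.sum_mul_sum]
              · intro i _
                apply integrable_finset_sum
                intro j _
                exact (((hEE i j).const_mul (x i)).mul_const (x j)).congr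
                  (Filter.Eventually.of_forall fun ω => by ring)
          _ = _ := by
              rw [Finsupp.sum_fintype _ _ (by simp)]
              refine Finset.sum_congr rfl fun i _ => ?_
              rw [Finsupp.sum_fintype _ _ (by simp), Finset.mul_sum]
              refine Finset.sum_congr rfl fun j _ => ?_
              ring
    have := hps.mul_mul_conjTranspose_same Sig⁻¹
    simpa [Matrix.conjTranspose_eq_transpose_of_trivial] using this

end
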